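/- arXiv:1810.02127 — 5 statements merged into one kernel-verified Lean document; each statement's English description precedes it below -/
import Mathlib

section
/- With w_{k+1} the last column of B_{k+1}⁻¹ and w_k the last column of B_k⁻¹ for nested nonsingular upper bidiagonal matrices, one has ‖w_{k+1}‖² = (β_k² ‖w_k‖² + 1)/α_{k+1}². -/
open Matrix


/-- For nested nonsingular upper bidiagonal matrices, with `w_{k+1}` the last
column of `B_{k+1}⁻¹` and `w_k` the last column of `B_k⁻¹`,
`‖w_{k+1}‖² = (β_k² ‖w_k‖² + 1)/α_{k+1}²`. -/
theorem stmt_7 {k : ℕ} (α : Fin (k+2) → ℝ) (β : Fin (k+1) → ℝ)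
    (hα : ∀ i, α i ≠ 0)
    (B : Matrix (Fin (k+2)) (Fin (k+2)) ℝ)
    (hdiag : ∀ i, B i i = α i)
    (hsuper : ∀ i : Fin (k+1), B i.castSucc i.succ = β i)
    (hzero : ∀ i j : Fin (k+2), (i : ℕ) ≠ (j : ℕ) → (j : ℕ) ≠ (i : ℕ) + 1 →
      B i j = 0)
    (Bk : Matrix (Fin (k+1)) (Fin (k+1)) ℝ)
    (hBk : Bk = B.submatrix Fin.castSucc Fin.castSucc)
    (w1 : Fin (k+2) → ℝ) (hw1 : w1 = fun i => B⁻¹ i (Fin.last (k+1)))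
    (w : Fin (k+1) → ℝ) (hw : w = fun i => Bk⁻¹ i (Fin.last k)) :
    ∑ i, (w1 i)^2 =
      ((β (Fin.last k))^2 * ∑ i, (w i)^2 + 1) / (α (Fin.last (k+1)))^2 := by
  set L : Fin (k+2) := Fin.last (k+1) with hL
  set l : Fin (k+1) := Fin.last k with hl
  -- B is upper triangular
  have hBt : B.BlockTriangular id := by
    intro i j hij
    have h1 : (j : ℕ) < (i : ℕ) := hij
    exact hzero i j (by omega) (by omega)
  have hdet : B.det ≠ 0 := by
    rw [Matrix.det_of_upperTriangular hBt]
    refine Finset.prod_ne_zero_iff.mpr fun i _ => ?_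
    rw [hdiag]; exact hα i
  have hdetU : IsUnit B.det := isUnit_iff_ne_zero.mpr hdet
  -- Bk is upper triangular
  have hBkt : Bk.BlockTriangular id := by
    intro i j hij
    have h1 : (j : ℕ) < (i : ℕ) := hij
    rw [hBk]
    exact hzero _ _ (by simp; omega) (by simp; omega)
  have hdetk : Bk.det ≠ 0 := by
    rw [Matrix.det_of_upperTriangular hBkt]
    refine Finset.prod_ne_zero_iff.mpr fun i _ => ?_
    rw [hBk]; simp only [Matrix.submatrix_apply]
    rw [hdiag]; exact hα _
  -- w satisfies Bk *ᵥ w = e_l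
  have hwv : w = Bk⁻¹ *ᵥ Pi.single l 1 := by
    funext i; rw [hw, Matrix.mulVec_single]; simp
  have hBkw : Bk *ᵥ w = Pi.single l 1 := by
    rw [hwv, Matrix.mulVec_mulVec, Matrix.mul_nonsing_inv _ (isUnit_iff_ne_zero.mpr hdetk), Matrix.one_mulVec]
  -- the alleged last column of B⁻¹
  set c : ℝ := -(β l) / α L with hc
  set v : Fin (k+2) → ℝ := Fin.snoc (fun j => c * w j) (1 / α L) with hv
  have hvc : ∀ j : Fin (k+1), v j.castSucc = c * w j := by
    intro j; rw [hv, Fin.snoc_castSucc]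
  have hvl : v L = 1 / α L := by rw [hv, hL]; exact Fin.snoc_last _ _
  have hBv : B *ᵥ v = Pi.single L 1 := by
    funext i
    induction i using Fin.lastCases with
    | last =>
      show ∑ m, B L m * v m = _
      rw [Fin.sum_univ_castSucc]
      have h0 : ∀ m : Fin (k+1), B L m.castSucc * v m.castSucc = 0 := by
        intro m
        rw [hzero L m.castSucc (by simp [hL]; omega) (by simp [hL]; omega), zero_mul]
      rw [Finset.sum_congr rfl fun m _ => h0 m, Finset.sum_const_zero, zero_add]
      have : (Fin.last (k+1) : Fin (k+2)) = L := hL.symm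
      rw [this, hdiag, hvl, Pi.single_eq_same, mul_one_div]
      exact div_self (hα L)
    | cast j =>
      show ∑ m, B j.castSucc m * v m = _
      rw [Fin.sum_univ_castSucc]
      have hsum : ∑ m : Fin (k+1), B j.castSucc m.castSucc * v m.castSucc
          = c * (Bk *ᵥ w) j := by
        rw [Matrix.mulVec, dotProduct, Finset.mul_sum]
        refine Finset.sum_congr rfl fun m _ => ?_
        rw [hvc, hBk]; simp only [Matrix.submatrix_apply]; ring
      have hlast : (Fin.last (k+1) : Fin (k+2)) = L := hL.symm
      rw [hsum, hBkw, hlast, hvl]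
      have hjL : j.castSucc ≠ L := by
        rw [hL]; exact (Fin.castSucc_lt_last j).ne
      rw [Pi.single_eq_of_ne hjL]
      by_cases hjl : j = l
      · subst hjl
        have hsl : l.succ = L := by rw [hl, hL]; exact Fin.succ_last k
        have hBl : B l.castSucc L = β l := by rw [← hsl]; exact hsuper l
        rw [Pi.single_eq_same, hBl]
        rw [hc]; field_simp; ring
      · have hj : (j : ℕ) ≠ k := fun h => hjl (Fin.ext (by simp [hl, h]))
        rw [Pi.single_eq_of_ne hjl, hzero j.castSucc L (by simp [hL]; omega) (by simp [hL]; omega)]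
        ring
  have hw1v : w1 = v := by
    have h1 : v = B⁻¹ *ᵥ (B *ᵥ v) := by
      rw [Matrix.mulVec_mulVec, Matrix.nonsing_inv_mul _ (isUnit_iff_ne_zero.mpr hdet), Matrix.one_mulVec]
    rw [hBv, Matrix.mulVec_single] at h1
    funext i
    rw [hw1, h1]; simp
  rw [hw1v, Fin.sum_univ_castSucc]
  have hrw : ∀ j : Fin (k+1), v j.castSucc ^ 2 = c^2 * (w j)^2 := by
    intro j; rw [hvc]; ring
  rw [Finset.sum_congr rfl fun j _ => hrw j, ← Finset.mul_sum]
  have hlast : (Fin.last (k+1) : Fin (k+2)) = L := hL.symm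
  rw [hlast, hvl, hc]
  have hαL := hα L
  field_simp
end

section
/- For nested nonsingular upper bidiagonal matrices B_{k-1} ⊂ B_k, the vector B_k^{−T} w_k equals (−(β_{k−1}/α_k) B_{k−1}^{−T} w_{k−1}; ‖w_k‖²), i.e., its first k−1 components are −(β_{k−1}/α_k) times B_{k−1}^{−T} w_{k−1} and its last component is ‖w_k‖². -/
open Matrix

/-- For nested nonsingular upper bidiagonal matrices `B_{k-1} ⊂ B_k`, the vector
`B_k^{−T} w_k` has first components `−(β_{k−1}/α_k) B_{k−1}^{−T} w_{k−1}` and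
last component `‖w_k‖²`. -/
theorem stmt_8 {k : ℕ} (α : Fin (k+2) → ℝ) (β : Fin (k+1) → ℝ)
    (hα : ∀ i, α i ≠ 0)
    (B : Matrix (Fin (k+2)) (Fin (k+2)) ℝ)
    (hdiag : ∀ i, B i i = α i)
    (hsuper : ∀ i : Fin (k+1), B i.castSucc i.succ = β i)
    (hzero : ∀ i j : Fin (k+2), (i : ℕ) ≠ (j : ℕ) → (j : ℕ) ≠ (i : ℕ) + 1 →
      B i j = 0)
    (Bm : Matrix (Fin (k+1)) (Fin (k+1)) ℝ)
    (hBm : Bm = B.submatrix Fin.castSucc Fin.castSucc)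
    (w : Fin (k+2) → ℝ) (hw : w = fun i => B⁻¹ i (Fin.last (k+1)))
    (wm : Fin (k+1) → ℝ) (hwm : wm = fun i => Bm⁻¹ i (Fin.last k)) :
    (∀ i : Fin (k+1),
      (Bᵀ)⁻¹.mulVec w i.castSucc =
        -(β (Fin.last k) / α (Fin.last (k+1))) * (Bmᵀ)⁻¹.mulVec wm i) ∧
    (Bᵀ)⁻¹.mulVec w (Fin.last (k+1)) = ∑ i, (w i)^2 := by
  set a := α (Fin.last (k+1)) with ha
  set b := β (Fin.last k) with hb
  -- entry facts
  have hBcc : ∀ i j : Fin (k+1), B i.castSucc j.castSucc = Bm i j := by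
    intro i j; rw [hBm]; rfl
  have hBlc : ∀ j : Fin (k+1), B (Fin.last (k+1)) j.castSucc = 0 := by
    intro j
    apply hzero <;> simp [Fin.last] <;> omega
  have hBcl : ∀ i : Fin (k+1),
      B i.castSucc (Fin.last (k+1)) = if i = Fin.last k then b else 0 := by
    intro i
    by_cases h : i = Fin.last k
    · subst h
      have : (Fin.last k).succ = Fin.last (k+1) := by
        ext; simp [Fin.last]
      rw [if_pos rfl, ← this, hsuper, hb]
    · rw [if_neg h]
      have hik : (i : ℕ) < k := by
        have := i.isLt
        have : (i : ℕ) ≠ k := fun hc => h (Fin.ext hc)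
        omega
      apply hzero <;> simp [Fin.last] <;> omega
  have hBll : B (Fin.last (k+1)) (Fin.last (k+1)) = a := hdiag _
  -- invertibility
  have hBu : IsUnit B.det := by
    have htri : B.BlockTriangular id := by
      intro i j hij
      have : (j : ℕ) < (i : ℕ) := hij
      apply hzero <;> omega
    rw [Matrix.det_of_upperTriangular htri]
    simp only [hdiag]
    exact (Finset.prod_ne_zero_iff.mpr fun i _ => hα i).isUnit
  have hBmu : IsUnit Bm.det := by
    have htri : Bm.BlockTriangular id := by
      intro i j hij
      have hlt : (j : ℕ) < (i : ℕ) := hij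
      rw [← hBcc]
      apply hzero <;> simp <;> omega
    rw [Matrix.det_of_upperTriangular htri]
    have : ∀ i : Fin (k+1), Bm i i = α i.castSucc := by
      intro i; rw [← hBcc, hdiag]
    simp only [this]
    exact (Finset.prod_ne_zero_iff.mpr fun i _ => hα _).isUnit
  -- column uniqueness for B
  have hcol : ∀ (v : Fin (k+2) → ℝ) (c : Fin (k+2)),
      B *ᵥ v = Pi.single c 1 → v = fun j => B⁻¹ j c := by
    intro v c hvc
    have h2 : B⁻¹ *ᵥ (B *ᵥ v) = B⁻¹ *ᵥ Pi.single c 1 := by rw [hvc]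
    rw [mulVec_mulVec, Matrix.nonsing_inv_mul _ hBu, one_mulVec,
      mulVec_single] at h2
    have h3 : v = B⁻¹.col c := by simpa using h2
    exact h3
  -- Bm * (column c of Bm⁻¹) = e_c
  have hBmcol : ∀ c : Fin (k+1),
      ∀ m : Fin (k+1), ∑ l, Bm m l * Bm⁻¹ l c = if m = c then 1 else 0 := by
    intro c m
    rw [← Matrix.mul_apply, Matrix.mul_nonsing_inv _ hBmu, Matrix.one_apply]
  -- values of w
  have hwv : (∀ j : Fin (k+1), w j.castSucc = -(b / a) * wm j) ∧
      w (Fin.last (k+1)) = a⁻¹ := by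
    set v : Fin (k+2) → ℝ := Fin.snoc (fun j => -(b / a) * wm j) a⁻¹ with hv
    have hBv : B *ᵥ v = Pi.single (Fin.last (k+1)) 1 := by
      funext j
      induction j using Fin.lastCases with
      | last =>
        simp only [Matrix.mulVec, dotProduct, Fin.sum_univ_castSucc, hv,
          Fin.snoc_castSucc, Fin.snoc_last, hBll, hBlc, Pi.single_eq_same]
        simp [mul_inv_cancel₀ (hα (Fin.last (k+1)))]
        exact mul_inv_cancel₀ (hα (Fin.last (k+1)))
      | cast m =>
        have hne : m.castSucc ≠ Fin.last (k+1) := Fin.ne_of_lt (Fin.castSucc_lt_last m)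
        simp only [Matrix.mulVec, dotProduct, Fin.sum_univ_castSucc, hv,
          Fin.snoc_castSucc, Fin.snoc_last, hBcc, hBcl,
          Pi.single_apply, if_neg hne]
        rw [(Fin.sum_univ_castSucc (fun l => Bm m l * (-(b / a) * wm l))).symm]
        have hsum : ∑ l, Bm m l * (-(b / a) * wm l)
            = -(b / a) * (if m = Fin.last k then 1 else 0) := by
          rw [← hBmcol (Fin.last k) m, Finset.mul_sum]
          congr 1; funext l
          rw [hwm]; ring
        rw [hsum]
        by_cases hm : m = Fin.last k
        · rw [if_pos hm, if_pos hm]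
          field_simp
          ring
        · rw [if_neg hm, if_neg hm]; ring
    have := hcol v (Fin.last (k+1)) hBv
    constructor
    · intro j
      have h1 : v j.castSucc = w j.castSucc := by rw [this, hw]
      rw [← h1, hv, Fin.snoc_castSucc]
    · have h1 : v (Fin.last (k+1)) = w (Fin.last (k+1)) := by rw [this, hw]
      rw [← h1, hv, Fin.snoc_last]
  -- columns of B⁻¹ at castSucc indices
  have hinvcol : ∀ i : Fin (k+1),
      (∀ j : Fin (k+1), B⁻¹ j.castSucc i.castSucc = Bm⁻¹ j i) ∧
      B⁻¹ (Fin.last (k+1)) i.castSucc = 0 := by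
    intro i
    set u : Fin (k+2) → ℝ := Fin.snoc (fun j => Bm⁻¹ j i) 0 with hu
    have hBuu : B *ᵥ u = Pi.single i.castSucc 1 := by
      funext j
      induction j using Fin.lastCases with
      | last =>
        have hne : Fin.last (k+1) ≠ i.castSucc :=
          (Fin.ne_of_lt (Fin.castSucc_lt_last i)).symm
        simp [Matrix.mulVec, dotProduct, Fin.sum_univ_castSucc, hu,
          Fin.snoc_castSucc, Fin.snoc_last, hBlc, Pi.single_apply, if_neg hne]
      | cast m =>
        have hne : m.castSucc ≠ Fin.last (k+1) := Fin.ne_of_lt (Fin.castSucc_lt_last m)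
        simp only [Matrix.mulVec, dotProduct, Fin.sum_univ_castSucc, hu,
          Fin.snoc_castSucc, Fin.snoc_last, hBcc, mul_zero, add_zero,
          Pi.single_apply]
        rw [(Fin.sum_univ_castSucc (fun l => Bm m l * Bm⁻¹ l i)).symm, hBmcol i m]
        simp [Fin.castSucc_inj]
    have := hcol u i.castSucc hBuu
    constructor
    · intro j
      have h1 : u j.castSucc = B⁻¹ j.castSucc i.castSucc := by rw [this]
      rw [← h1, hu, Fin.snoc_castSucc]
    · have h1 : u (Fin.last (k+1)) = B⁻¹ (Fin.last (k+1)) i.castSucc := by rw [this]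
      rw [← h1, hu, Fin.snoc_last]
  constructor
  · intro i
    rw [← Matrix.transpose_nonsing_inv, ← Matrix.transpose_nonsing_inv]
    simp only [Matrix.mulVec, dotProduct, Matrix.transpose_apply]
    rw [Fin.sum_univ_castSucc, (hinvcol i).2, zero_mul, add_zero,
      Finset.mul_sum]
    congr 1; funext l
    rw [(hinvcol i).1 l, hwv.1 l]
    ring
  · rw [← Matrix.transpose_nonsing_inv]
    simp only [Matrix.mulVec, dotProduct, Matrix.transpose_apply]
    congr 1; funext l
    rw [hw, sq]
end

section
/- Let (γ_k), (δ_k) be positive reals and μ > 0. Define γ₀^{(μ)} = 1/μ and γ_{k+1}^{(μ)} = (γ_k^{(μ)} − γ_k)/(μ(γ_k^{(μ)} − γ_k) + δ_{k+1}), and define φ₀ = 1 and φ_{k+1} = φ_k/(φ_k + δ_{k+1}). If γ_k^{(μ)} > γ_k > 0 for all k, then μ γ_k^{(μ)} ≤ φ_k for all k; i.e., the Gauss-Radau coefficient satisfies γ_k^{(μ)} ‖r_k‖² ≤ (‖r_k‖²/μ)(‖r_k‖²/‖p_k‖²) when φ_k = ‖r_k‖²/‖p_k‖². -/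
/-- If `γ₀^{(μ)} = 1/μ`, `γ_{k+1}^{(μ)} = (γ_k^{(μ)} − γ_k)/(μ(γ_k^{(μ)} − γ_k) + δ_{k+1})`,
`φ₀ = 1`, `φ_{k+1} = φ_k/(φ_k + δ_{k+1})`, with `γ_k, δ_k > 0`, `μ > 0` and
`γ_k < γ_k^{(μ)}` for all `k`, then `μ γ_k^{(μ)} ≤ φ_k` for all `k`. -/
theorem stmt_12 (γ δ : ℕ → ℝ) (hγ : ∀ k, 0 < γ k) (hδ : ∀ k, 0 < δ k)
    (μ : ℝ) (hμ : 0 < μ)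
    (g : ℕ → ℝ) (hg0 : g 0 = 1/μ)
    (hg : ∀ k, g (k+1) = (g k - γ k) / (μ*(g k - γ k) + δ (k+1)))
    (φ : ℕ → ℝ) (hφ0 : φ 0 = 1)
    (hφ : ∀ k, φ (k+1) = φ k / (φ k + δ (k+1)))
    (hgγ : ∀ k, γ k < g k) :
    ∀ k, μ * g k ≤ φ k := by
  have key : ∀ k, μ * g k ≤ φ k ∧ 0 < φ k := by
    intro k
    induction k with
    | zero =>
      constructor
      · rw [hg0, hφ0]; field_simp; norm_num
      · rw [hφ0]; norm_num
    | succ k ih =>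
      obtain ⟨h1, h2⟩ := ih
      have ha : 0 < μ * (g k - γ k) := by
        have := hgγ k; nlinarith
      have haφ : μ * (g k - γ k) ≤ φ k := by
        have := hγ k; nlinarith
      have hd := hδ (k+1)
      have hden1 : 0 < μ * (g k - γ k) + δ (k+1) := by linarith
      have hden2 : 0 < φ k + δ (k+1) := by linarith
      constructor
      · rw [hg k, hφ k]
        rw [mul_div_assoc', div_le_div_iff₀ hden1 hden2]
        nlinarith
      · rw [hφ k]
        positivity
  exact fun k => (key k).1
end

section
/- Let L_k be the lower bidiagonal CG Cholesky factor (diagonal 1/√γ_{j−1}, subdiagonal √(δ_j/γ_{j−1})) and let y solve L_kᵀ L_k y = ‖r₀‖ e₁. Then y_j = (−1)^{j+1} (1/‖r_{j−1}‖) ∑_{i=j−1}^{k−1} ψ_i for j = 1,…,k, where ψ_i = γ_i ‖r_i‖² and ‖r_j‖² = ‖r₀‖² ∏_{i=1}^{j} δ_i. Consequently ξ_k := ‖r₀‖² e₁ᵀ T_k^{−2} e₁ = ∑_{j=0}^{k−1} ‖r_j‖^{−2} (∑_{i=j}^{k−1} ψ_i)². -/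
open Matrix

/-- For the CG Cholesky factor `L` and `y` with `L Lᵀ y = ‖r₀‖ e₁` (i.e.
`y = ‖r₀‖ L⁻ᵀL⁻¹ e₁`), the entries of `y` are
`y_j = (−1)^{j+1} (1/‖r_{j−1}‖) ∑_{i=j−1}^{k−1} ψ_i` with `ψ_i = γ_i ‖r_i‖²`
and `‖r_j‖² = ‖r₀‖² ∏_{i=1}^{j} δ_i`; consequently
`ξ_k = ‖r₀‖² e₁ᵀ T_k⁻² e₁ = ∑_{j=0}^{k−1} ‖r_j‖⁻² (∑_{i=j}^{k−1} ψ_i)²`. -/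
theorem stmt_16 {k : ℕ} (γ δ : ℕ → ℝ)
    (hγ : ∀ j, 0 < γ j) (hδ : ∀ j, 1 ≤ j → 0 < δ j)
    (ρ0 : ℝ) (hρ0 : 0 < ρ0)
    (R : ℕ → ℝ) (hR : ∀ j, R j = ρ0^2 * ∏ i ∈ Finset.Icc 1 j, δ i)
    (L : Matrix (Fin (k+1)) (Fin (k+1)) ℝ)
    (hdiag : ∀ i : Fin (k+1), L i i = 1 / Real.sqrt (γ i))
    (hsub : ∀ i j : Fin (k+1), (i : ℕ) = (j : ℕ) + 1 →
      L i j = Real.sqrt (δ i / γ j))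
    (hzero : ∀ i j : Fin (k+1), (i : ℕ) ≠ (j : ℕ) → (i : ℕ) ≠ (j : ℕ) + 1 →
      L i j = 0)
    (y : Fin (k+1) → ℝ)
    (hy : (L * Lᵀ).mulVec y = ρ0 • (Pi.single (0 : Fin (k+1)) (1 : ℝ) : Fin (k+1) → ℝ)) :
    (∀ j : Fin (k+1), y j =
      (-1 : ℝ)^(j : ℕ) * (Real.sqrt (R j))⁻¹ *
        ∑ i ∈ Finset.Ico (j : ℕ) (k+1), γ i * R i) ∧
    ρ0^2 * (Pi.single (0 : Fin (k+1)) (1 : ℝ) ⬝ᵥ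
        ((L * Lᵀ)⁻¹ * (L * Lᵀ)⁻¹).mulVec (Pi.single (0 : Fin (k+1)) (1 : ℝ))) =
      ∑ j ∈ Finset.range (k+1), (R j)⁻¹ * (∑ i ∈ Finset.Ico j (k+1), γ i * R i)^2 := by
  classical
  have hRpos : ∀ j, 0 < R j := by
    intro j
    rw [hR]
    exact mul_pos (pow_pos hρ0 2)
      (Finset.prod_pos fun i hi => hδ i (Finset.mem_Icc.mp hi).1)
  have hRsucc : ∀ j, R (j+1) = R j * δ (j+1) := by
    intro j
    rw [hR, hR, Finset.prod_Icc_succ_top (by omega : 1 ≤ j + 1)]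
    ring
  have hsqR : ∀ j, Real.sqrt (R j) * Real.sqrt (R j) = R j :=
    fun j => Real.mul_self_sqrt (hRpos j).le
  have hsqRne : ∀ j, Real.sqrt (R j) ≠ 0 :=
    fun j => ne_of_gt (Real.sqrt_pos.mpr (hRpos j))
  have hsqγ : ∀ j, Real.sqrt (γ j) * Real.sqrt (γ j) = γ j :=
    fun j => Real.mul_self_sqrt (hγ j).le
  have hsqγne : ∀ j, Real.sqrt (γ j) ≠ 0 :=
    fun j => ne_of_gt (Real.sqrt_pos.mpr (hγ j))
  set e : Fin (k+1) → ℝ := (Pi.single (0 : Fin (k+1)) (1 : ℝ)) with he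
  set S : ℕ → ℝ := fun j => ∑ i ∈ Finset.Ico j (k+1), γ i * R i with hSdef
  set z : Fin (k+1) → ℝ :=
    fun j => (-1:ℝ)^(j:ℕ) * (Real.sqrt (R j))⁻¹ * S (j:ℕ) with hzdef
  set w : Fin (k+1) → ℝ :=
    fun i => (-1:ℝ)^(i:ℕ) * Real.sqrt (γ i) * Real.sqrt (R i) with hwdef
  -- Step A : Lᵀ *ᵥ z = w
  have hA : Lᵀ.mulVec z = w := by
    funext i
    rcases lt_or_eq_of_le (Nat.lt_succ_iff.mp i.isLt) with hik | hik
    · -- i < k : two nonzero terms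
      set i' : Fin (k+1) := ⟨(i:ℕ)+1, by omega⟩ with hi'
      have hne : i ≠ i' := by
        intro h; apply absurd (congrArg Fin.val h); simp [hi']
      have hsum : Lᵀ.mulVec z i = L i i * z i + L i' i * z i' := by
        rw [Matrix.mulVec, dotProduct]
        rw [← Finset.sum_subset (Finset.subset_univ ({i, i'} : Finset (Fin (k+1))))
          (fun x _ hx => ?_), Finset.sum_pair hne]
        · simp [Matrix.transpose_apply]
        · simp only [Finset.mem_insert, Finset.mem_singleton, not_or] at hx
          have h1 : (x:ℕ) ≠ (i:ℕ) := fun h => hx.1 (Fin.ext h)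
          have h2 : (x:ℕ) ≠ (i:ℕ) + 1 := fun h => hx.2 (Fin.ext (by simp [hi', h]))
          simp [Matrix.transpose_apply, hzero x i h1 h2]
      rw [hsum, hdiag i, hsub i' i (by simp [hi'])]
      have hvi' : (i' : ℕ) = (i:ℕ) + 1 := by simp [hi']
      have hSsplit : S (i:ℕ) = γ i * R i + S ((i:ℕ)+1) := by
        rw [hSdef]
        exact Finset.sum_eq_sum_Ico_succ_bot (by omega) _
      have hsδ : Real.sqrt (δ ((i:ℕ)+1)) * Real.sqrt (δ ((i:ℕ)+1)) = δ ((i:ℕ)+1) :=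
        Real.mul_self_sqrt (hδ _ (by omega)).le
      have hsδne : Real.sqrt (δ ((i:ℕ)+1)) ≠ 0 :=
        ne_of_gt (Real.sqrt_pos.mpr (hδ _ (by omega)))
      have hsqdiv : Real.sqrt (δ (i':ℕ) / γ (i:ℕ)) =
          Real.sqrt (δ ((i:ℕ)+1)) / Real.sqrt (γ (i:ℕ)) := by
        rw [hvi', Real.sqrt_div (hδ _ (by omega)).le]
      have hsqRs : Real.sqrt (R ((i:ℕ)+1)) =
          Real.sqrt (R (i:ℕ)) * Real.sqrt (δ ((i:ℕ)+1)) := by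
        rw [hRsucc, Real.sqrt_mul (hRpos _).le]
      rw [hzdef, hwdef, hsqdiv]
      simp only [hvi', hSsplit, hsqRs, pow_succ]
      rw [show γ (i:ℕ) * R (i:ℕ) =
        (Real.sqrt (γ (i:ℕ)) * Real.sqrt (γ (i:ℕ))) *
          (Real.sqrt (R (i:ℕ)) * Real.sqrt (R (i:ℕ))) from by rw [hsqγ, hsqR]]
      field_simp [hsqγne (i:ℕ), hsqRne (i:ℕ), hsδne]
      ring
    · -- i = k : single term
      have hsum : Lᵀ.mulVec z i = L i i * z i := by
        rw [Matrix.mulVec, dotProduct]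
        refine Finset.sum_eq_single_of_mem i (Finset.mem_univ i) fun x _ hx => ?_
        have h1 : (x:ℕ) ≠ (i:ℕ) := fun h => hx (Fin.ext h)
        have h2 : (x:ℕ) ≠ (i:ℕ) + 1 := by omega
        simp [Matrix.transpose_apply, hzero x i h1 h2]
      have hSlast : S (i:ℕ) = γ (i:ℕ) * R (i:ℕ) := by
        simp only [hSdef]
        rw [hik, Nat.Ico_succ_singleton, Finset.sum_singleton]
      rw [hsum, hdiag i, hzdef, hwdef]
      simp only [hSlast]
      rw [show γ (i:ℕ) * R (i:ℕ) =
        (Real.sqrt (γ (i:ℕ)) * Real.sqrt (γ (i:ℕ))) *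
          (Real.sqrt (R (i:ℕ)) * Real.sqrt (R (i:ℕ))) from by rw [hsqγ, hsqR]]
      field_simp [hsqγne (i:ℕ), hsqRne (i:ℕ)]
  -- Step B : L *ᵥ w = ρ0 • e
  have hB : L.mulVec w = ρ0 • e := by
    funext i
    rcases Nat.eq_zero_or_pos (i:ℕ) with hi0 | hi0
    · have hieq : i = 0 := Fin.ext hi0
      have hsum : L.mulVec w i = L i i * w i := by
        rw [Matrix.mulVec, dotProduct]
        refine Finset.sum_eq_single_of_mem i (Finset.mem_univ i) fun x _ hx => ?_
        have h1 : (i:ℕ) ≠ (x:ℕ) := fun h => hx (Fin.ext h.symm)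
        have h2 : (i:ℕ) ≠ (x:ℕ) + 1 := by omega
        simp [hzero i x h1 h2]
      have hR0 : R 0 = ρ0 ^ 2 := by rw [hR]; simp
      have hsqR0 : Real.sqrt (R 0) = ρ0 := by
        rw [hR0, Real.sqrt_sq hρ0.le]
      rw [hsum, hdiag i, hwdef]
      simp only [hieq, Fin.val_zero, pow_zero, he, Pi.smul_apply, Pi.single_eq_same,
        smul_eq_mul, mul_one, hsqR0]
      field_simp [hsqγne 0]
    · set i₀ : Fin (k+1) := ⟨(i:ℕ)-1, by omega⟩ with hi₀
      have hvi₀ : (i₀:ℕ) = (i:ℕ) - 1 := rfl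
      have hii : (i:ℕ) = (i₀:ℕ) + 1 := by omega
      have hne : i₀ ≠ i := by
        intro h; apply absurd (congrArg Fin.val h); omega
      have hsum : L.mulVec w i = L i i₀ * w i₀ + L i i * w i := by
        rw [Matrix.mulVec, dotProduct]
        rw [← Finset.sum_subset (Finset.subset_univ ({i₀, i} : Finset (Fin (k+1))))
          (fun x _ hx => ?_), Finset.sum_pair hne]
        simp only [Finset.mem_insert, Finset.mem_singleton, not_or] at hx
        have h1 : (i:ℕ) ≠ (x:ℕ) := fun h => hx.2 (Fin.ext h.symm)
        have h2 : (i:ℕ) ≠ (x:ℕ) + 1 := by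
          intro h
          exact hx.1 (Fin.ext (by omega))
        simp [hzero i x h1 h2]
      have hδi : Real.sqrt (δ (i:ℕ)) * Real.sqrt (δ (i:ℕ)) = δ (i:ℕ) :=
        Real.mul_self_sqrt (hδ _ hi0).le
      have hsqdiv : Real.sqrt (δ (i:ℕ) / γ (i₀:ℕ)) =
          Real.sqrt (δ (i:ℕ)) / Real.sqrt (γ (i₀:ℕ)) :=
        Real.sqrt_div (hδ _ hi0).le _
      have hsqRs : Real.sqrt (R (i:ℕ)) =
          Real.sqrt (R (i₀:ℕ)) * Real.sqrt (δ (i:ℕ)) := by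
        conv_lhs => rw [hii]
        rw [hRsucc, Real.sqrt_mul (hRpos _).le, ← hii]
      have heside : (ρ0 • e) i = 0 := by
        have : i ≠ 0 := by
          intro h; rw [h] at hi0; simp at hi0
        simp [he, Pi.single_eq_of_ne this]
      rw [hsum, hdiag i, hsub i i₀ hii, hwdef, hsqdiv, heside]
      simp only [hsqRs]
      have hpow : (-1:ℝ)^(i:ℕ) = -(-1:ℝ)^(i₀:ℕ) := by
        rw [hii, pow_succ]; ring
      rw [hpow]
      field_simp [hsqγne ((i:ℕ)-1), hsqγne (i:ℕ), hsqγne (i₀:ℕ)]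
      ring
  have hMz : (L * Lᵀ).mulVec z = ρ0 • e := by
    rw [← Matrix.mulVec_mulVec, hA, hB]
  -- invertibility
  have hLtri : L.BlockTriangular OrderDual.toDual := by
    intro i j hij
    have h1 : (i:ℕ) ≠ (j:ℕ) := by
      simp only [OrderDual.toDual_lt_toDual] at hij
      exact Fin.val_ne_of_ne (ne_of_lt hij)
    have h2 : (i:ℕ) ≠ (j:ℕ) + 1 := by
      simp only [OrderDual.toDual_lt_toDual, Fin.lt_iff_val_lt_val] at hij
      omega
    exact hzero i j h1 h2
  have hdetL : L.det ≠ 0 := by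
    rw [Matrix.det_of_lowerTriangular L hLtri]
    refine Finset.prod_ne_zero_iff.mpr fun i _ => ?_
    rw [hdiag i]
    exact one_div_ne_zero (hsqγne i)
  have hdetM : IsUnit (L * Lᵀ).det := by
    rw [Matrix.det_mul, Matrix.det_transpose]
    exact (mul_ne_zero hdetL hdetL).isUnit
  have hyz : y = z := by
    have h := hy.trans hMz.symm
    have h2 := congrArg ((L * Lᵀ)⁻¹.mulVec) h
    rwa [Matrix.mulVec_mulVec, Matrix.mulVec_mulVec,
      Matrix.nonsing_inv_mul _ hdetM, Matrix.one_mulVec, Matrix.one_mulVec] at h2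
  refine ⟨fun j => by rw [hyz], ?_⟩
  -- second part
  have hMsymm : (L * Lᵀ)ᵀ = L * Lᵀ := by
    rw [Matrix.transpose_mul, Matrix.transpose_transpose]
  have hyinv : y = ρ0 • (L * Lᵀ)⁻¹.mulVec e := by
    have h2 := congrArg ((L * Lᵀ)⁻¹.mulVec) hy
    rw [Matrix.mulVec_mulVec, Matrix.nonsing_inv_mul _ hdetM, Matrix.one_mulVec,
      Matrix.mulVec_smul] at h2
    exact h2
  have key : e ⬝ᵥ ((L * Lᵀ)⁻¹ * (L * Lᵀ)⁻¹).mulVec e =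
      ((L * Lᵀ)⁻¹.mulVec e) ⬝ᵥ ((L * Lᵀ)⁻¹.mulVec e) := by
    rw [← Matrix.mulVec_mulVec, Matrix.dotProduct_mulVec, ← Matrix.mulVec_transpose,
      Matrix.transpose_nonsing_inv, hMsymm]
  rw [key]
  have hyy : ρ0 ^ 2 * (((L * Lᵀ)⁻¹.mulVec e) ⬝ᵥ ((L * Lᵀ)⁻¹.mulVec e)) = y ⬝ᵥ y := by
    rw [hyinv, smul_dotProduct, dotProduct_smul, smul_eq_mul, smul_eq_mul]
    ring
  rw [hyy, dotProduct]
  have hyj : ∀ j : Fin (k+1), y j * y j = (R (j:ℕ))⁻¹ * (S (j:ℕ))^2 := by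
    intro j
    rw [hyz, hzdef]
    have h1 : (-1:ℝ)^(j:ℕ) * (-1:ℝ)^(j:ℕ) = 1 := by
      rw [← mul_pow]; norm_num
    calc ((-1:ℝ)^(j:ℕ) * (Real.sqrt (R (j:ℕ)))⁻¹ * S (j:ℕ)) *
          ((-1:ℝ)^(j:ℕ) * (Real.sqrt (R (j:ℕ)))⁻¹ * S (j:ℕ))
        = ((-1:ℝ)^(j:ℕ) * (-1:ℝ)^(j:ℕ)) *
            (((Real.sqrt (R (j:ℕ)))⁻¹ * (Real.sqrt (R (j:ℕ)))⁻¹) * (S (j:ℕ))^2) := by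
          ring
      _ = (R (j:ℕ))⁻¹ * (S (j:ℕ))^2 := by
          rw [h1, ← mul_inv, hsqR]; ring
  rw [Finset.sum_congr rfl (fun j _ => hyj j)]
  rw [Fin.sum_univ_eq_sum_range (fun n => (R n)⁻¹ * (S n)^2) (k+1)]
end

section
/- Rigal–Gaches normwise backward error: Let A ∈ ℝ^{N×N}, b ∈ ℝᴺ, and x̃ ∈ ℝᴺ with x̃ ≠ 0 or b ≠ 0, and r̃ = b − A x̃. Then min{ δ ≥ 0 : ∃ ΔA, Δb with (A + ΔA) x̃ = b + Δb, ‖ΔA‖ ≤ δ‖A‖, ‖Δb‖ ≤ δ‖b‖ } = ‖r̃‖/(‖A‖‖x̃‖ + ‖b‖), provided ‖A‖‖x̃‖ + ‖b‖ > 0 (‖·‖ the spectral norm for matrices, Euclidean norm for vectors). -/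
set_option synthInstance.maxHeartbeats 1000000
set_option maxHeartbeats 1000000


/-- Rigal–Gaches: the normwise backward error
`min{δ ≥ 0 : ∃ ΔA Δb, (A + ΔA) x̃ = b + Δb, ‖ΔA‖ ≤ δ‖A‖, ‖Δb‖ ≤ δ‖b‖}`
equals `‖r̃‖/(‖A‖‖x̃‖ + ‖b‖)` with `r̃ = b − A x̃`, provided
`‖A‖‖x̃‖ + ‖b‖ > 0` (operator 2-norm / Euclidean norm). -/
theorem stmt_19 {N : ℕ}
    (A : EuclideanSpace ℝ (Fin N) →L[ℝ] EuclideanSpace ℝ (Fin N))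
    (b xt : EuclideanSpace ℝ (Fin N))
    (rt : EuclideanSpace ℝ (Fin N)) (hrt : rt = b - A xt)
    (hpos : 0 < ‖A‖ * ‖xt‖ + ‖b‖) :
    IsLeast {δ : ℝ | 0 ≤ δ ∧
        ∃ (ΔA : EuclideanSpace ℝ (Fin N) →L[ℝ] EuclideanSpace ℝ (Fin N))
          (Δb : EuclideanSpace ℝ (Fin N)),
          (A + ΔA) xt = b + Δb ∧ ‖ΔA‖ ≤ δ * ‖A‖ ∧ ‖Δb‖ ≤ δ * ‖b‖}
      (‖rt‖ / (‖A‖ * ‖xt‖ + ‖b‖)) := by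
  set den : ℝ := ‖A‖ * ‖xt‖ + ‖b‖ with hden
  have hη0 : 0 ≤ ‖rt‖ / den := div_nonneg (norm_nonneg _) hpos.le
  constructor
  · refine ⟨hη0, ?_⟩
    by_cases hx : xt = 0
    · -- xt = 0 : take ΔA = 0, Δb = -b
      subst hx
      have hb : den = ‖b‖ := by simp [hden]
      have hbpos : 0 < ‖b‖ := hb ▸ hpos
      refine ⟨0, -b, by simp, by simp [mul_nonneg hη0 (norm_nonneg A)], ?_⟩
      have : rt = b := by simp [hrt]
      rw [this, hb, norm_neg, div_mul_cancel₀ _ hbpos.ne']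
    · have hxn : (0:ℝ) < ‖xt‖ := norm_pos_iff.mpr hx
      set θ : ℝ := ‖A‖ * ‖xt‖ / den with hθ
      refine ⟨(θ / ‖xt‖ ^ 2) • ((innerSL ℝ xt).smulRight rt),
        -((‖b‖ / den) • rt), ?_, ?_, ?_⟩
      · have hinner : (innerSL ℝ xt) xt = ‖xt‖ ^ 2 := real_inner_self_eq_norm_sq xt
        have happ : ((θ / ‖xt‖ ^ 2) • ((innerSL ℝ xt).smulRight rt)) xt = θ • rt := by
          simp only [ContinuousLinearMap.smul_apply, ContinuousLinearMap.smulRight_apply,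
            hinner, smul_smul]
          rw [div_mul_cancel₀ _ (by positivity : (‖xt‖:ℝ) ^ 2 ≠ 0)]
        have h1θ : 1 - θ = ‖b‖ / den := by
          field_simp [hθ]
          have hθd : θ * den = ‖A‖ * ‖xt‖ := by rw [hθ]; exact div_mul_cancel₀ _ hpos.ne'
          rw [hden] at hθd; linear_combination -hθd
        rw [ContinuousLinearMap.add_apply, happ]
        have : A xt = b - rt := by rw [hrt]; abel
        rw [this]
        rw [← h1θ]
        module
      · have hns : ‖(innerSL ℝ xt).smulRight rt‖ = ‖xt‖ * ‖rt‖ := by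
          rw [ContinuousLinearMap.norm_smulRight_apply, innerSL_apply_norm]
        rw [norm_smul (θ / ‖xt‖ ^ 2) (((innerSL ℝ) xt).smulRight rt), hns, Real.norm_eq_abs, abs_of_nonneg
          (div_nonneg (div_nonneg (mul_nonneg (norm_nonneg _) (norm_nonneg _)) hpos.le)
            (by positivity))]
        refine le_of_eq ?_
        field_simp
      · rw [norm_neg, norm_smul, Real.norm_eq_abs,
          abs_of_nonneg (div_nonneg (norm_nonneg b) hpos.le)]
        rw [div_mul_eq_mul_div, div_mul_eq_mul_div, mul_comm]
  · rintro δ ⟨hδ0, ΔA, Δb, heq, hA, hb⟩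
    have hr : rt = ΔA xt - Δb := by
      have h : A xt + ΔA xt = b + Δb := by simpa using heq
      rw [hrt, sub_eq_sub_iff_add_eq_add]
      exact h.symm.trans (add_comm _ _)
    have hnr : ‖rt‖ ≤ δ * den := by
      rw [hr]
      calc ‖ΔA xt - Δb‖ ≤ ‖ΔA xt‖ + ‖Δb‖ := norm_sub_le _ _
        _ ≤ ‖ΔA‖ * ‖xt‖ + ‖Δb‖ := by gcongr; exact ΔA.le_opNorm xt
        _ ≤ δ * ‖A‖ * ‖xt‖ + δ * ‖b‖ := by gcongr
        _ = δ * den := by rw [hden]; ring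
    rw [div_le_iff₀ hpos]
    linarith
end
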